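/- Let μ be a Borel probability measure on X, let x_1, …, x_N ∈ X, and let V_1, …, V_N be pairwise disjoint Borel sets whose union is X, with V_j contained in the closed ball of radius r > 0 centered at x_j and μ(V_j) = 1/N for every j. Let M ≥ 0 satisfy |⟨Q f(u), K f(v)⟩| ≤ M for all u, v ∈ X. Then for every index i, the finite clean attention output Φ̄(i) and the continuous attention output Φ_M(x_i) satisfy ‖Φ̄(i) − Φ_M(x_i)‖ ≤ (exp(M)·C_V + 2·exp(2M)·B_f²·C_Q·C_K·C_V) · r. -/

import Mathlib

open MeasureTheory
open scoped RealInnerProductSpace BigOperators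

lemma exp_lip9 {a b M : ℝ} (ha : a ≤ M) (hb : b ≤ M) :
    |Real.exp a - Real.exp b| ≤ Real.exp M * |a - b| := by
  wlog hab : b ≤ a generalizing a b
  · rw [abs_sub_comm (Real.exp a), abs_sub_comm a b]
    exact this hb ha (le_of_not_ge hab)
  rw [abs_of_nonneg (sub_nonneg.2 (Real.exp_le_exp.2 hab)),
    abs_of_nonneg (sub_nonneg.2 hab)]
  have h1 : Real.exp a * ((b - a) + 1) ≤ Real.exp b := by
    calc Real.exp a * ((b - a) + 1) ≤ Real.exp a * Real.exp (b - a) :=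
        mul_le_mul_of_nonneg_left (Real.add_one_le_exp _) (Real.exp_pos a).le
      _ = Real.exp b := by rw [← Real.exp_add]; ring_nf
  nlinarith [Real.exp_le_exp.2 ha, Real.exp_pos a]

lemma split_integral9 {X : Type*} [MeasurableSpace X] {μ : Measure X} {N : ℕ}
    {P : Fin N → Set X} (hPmeas : ∀ j, MeasurableSet (P j))
    (hPdisj : Pairwise fun j k => Disjoint (P j) (P k))
    (hPcover : (⋃ j, P j) = Set.univ)
    {E : Type*} [NormedAddCommGroup E] [NormedSpace ℝ E]
    (h : X → E) (hint : Integrable h μ) :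
    ∫ y, h y ∂μ = ∑ j, ∫ y in P j, h y ∂μ := by
  have hbi : (⋃ j ∈ Finset.univ, P j) = Set.univ := by simpa using hPcover
  rw [← setIntegral_univ, ← hbi,
    integral_biUnion_finset Finset.univ (fun j _ => hPmeas j)
      ((hPdisj.set_pairwise _).mono' (by intro j k hjk; exact hjk))
      (fun j _ => hint.integrableOn)]


set_option maxHeartbeats 1000000 in
/-- For a Borel probability measure `μ` and a partition `P 1, …, P N` of `X`
into Borel sets with `P j ⊆ closedBall (x j) r` and `μ (P j) = 1/N`, the finite clean
attention output `Φ̄(i)` and the continuous attention output `Φ_M(x i)` satisfy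
`‖Φ̄(i) − Φ_M(x i)‖ ≤ (exp(M)·C_V + 2·exp(2M)·B_f²·C_Q·C_K·C_V) · r`. -/
theorem clean_attention_to_manifold_attention_bound
    {D : ℕ} {X : Type*} [MetricSpace X] [MeasurableSpace X] [BorelSpace X]
    (μ : Measure X) [IsProbabilityMeasure μ]
    (Q K V : EuclideanSpace ℝ (Fin D) →ₗ[ℝ] EuclideanSpace ℝ (Fin D))
    (C_Q C_K C_V B_f r : ℝ)
    (hCQ : 0 < C_Q) (hCK : 0 < C_K) (hCV : 0 < C_V) (hBf : 0 < B_f) (hr : 0 < r)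
    (hQ : ∀ u, ‖Q u‖ ≤ C_Q * ‖u‖) (hK : ∀ u, ‖K u‖ ≤ C_K * ‖u‖)
    (hV : ∀ u, ‖V u‖ ≤ C_V * ‖u‖)
    (f : X → EuclideanSpace ℝ (Fin D))
    (hfLip : ∀ a b, ‖f a - f b‖ ≤ dist a b)
    (hfB : ∀ x, ‖f x‖ ≤ B_f)
    (N : ℕ) (x : Fin N → X) (P : Fin N → Set X)
    (hPmeas : ∀ j, MeasurableSet (P j))
    (hPdisj : Pairwise fun j k => Disjoint (P j) (P k))
    (hPcover : (⋃ j, P j) = Set.univ)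
    (hPball : ∀ j, P j ⊆ Metric.closedBall (x j) r)
    (hPmass : ∀ j, μ (P j) = (N : ENNReal)⁻¹)
    (M : ℝ) (hM0 : 0 ≤ M)
    (hM : ∀ u v : X, abs ⟪Q (f u), K (f v)⟫ ≤ M)
    (i : Fin N) :
    ‖(∑ j, Real.exp ⟪Q (f (x i)), K (f (x j))⟫)⁻¹ •
        (∑ j, Real.exp ⟪Q (f (x i)), K (f (x j))⟫ • V (f (x j))) -
      (∫ y, Real.exp ⟪Q (f (x i)), K (f y)⟫ ∂μ)⁻¹ •
        (∫ y, Real.exp ⟪Q (f (x i)), K (f y)⟫ • V (f y) ∂μ)‖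
      ≤ (Real.exp M * C_V + 2 * Real.exp (2 * M) * B_f ^ 2 * C_Q * C_K * C_V) * r := by
  classical
  have hN : 0 < N := i.pos
  set g : X → ℝ := fun y => Real.exp ⟪Q (f (x i)), K (f y)⟫ with hg
  set w : X → EuclideanSpace ℝ (Fin D) := fun y => g y • V (f y) with hw
  -- continuity
  have hLip : LipschitzWith 1 f := LipschitzWith.of_dist_le_mul fun a b => by
    rw [NNReal.coe_one, one_mul, dist_eq_norm]; exact hfLip a b
  have hfc : Continuous f := hLip.continuous
  have hKc : Continuous K := K.continuous_of_finiteDimensional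
  have hVc : Continuous V := V.continuous_of_finiteDimensional
  have hgc : Continuous g :=
    Real.continuous_exp.comp (Continuous.inner continuous_const (hKc.comp hfc))
  have hwc : Continuous w := hgc.smul (hVc.comp hfc)
  -- bounds on g
  have hgpos : ∀ y, 0 < g y := fun y => Real.exp_pos _
  have hgleM : ∀ y, g y ≤ Real.exp M :=
    fun y => Real.exp_le_exp.2 ((le_abs_self _).trans (hM (x i) y))
  have hggeM : ∀ y, Real.exp (-M) ≤ g y :=
    fun y => Real.exp_le_exp.2 (neg_le_of_abs_le (hM (x i) y))
  have hVB : ∀ y, ‖V (f y)‖ ≤ C_V * B_f := by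
    intro y
    exact (hV _).trans (by nlinarith [hfB y, hCV.le])
  have hwb : ∀ y, ‖w y‖ ≤ Real.exp M * (C_V * B_f) := by
    intro y
    rw [hw, norm_smul, Real.norm_eq_abs, abs_of_pos (hgpos y)]
    exact mul_le_mul (hgleM y) (hVB y) (norm_nonneg _) (Real.exp_pos M).le
  -- integrability
  have hgint : Integrable g μ := by
    refine (integrable_const (Real.exp M)).mono' hgc.aestronglyMeasurable ?_
    filter_upwards with y
    rw [Real.norm_eq_abs, abs_of_pos (hgpos y)]; exact hgleM y
  have hwint : Integrable w μ :=
    (integrable_const (Real.exp M * (C_V * B_f))).mono' hwc.aestronglyMeasurable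
      (Filter.Eventually.of_forall hwb)
  -- partition facts
  have hμPr : ∀ j, (μ (P j)).toReal = (N : ℝ)⁻¹ := by
    intro j; rw [hPmass]; simp
  have hμPfin : ∀ j, μ (P j) < ⊤ := by
    intro j; rw [hPmass]
    exact ENNReal.inv_lt_top.2 (by exact_mod_cast hN)
  -- key pointwise bounds
  have hVr : ∀ j, ∀ y ∈ P j, ‖V (f (x j)) - V (f y)‖ ≤ C_V * r := by
    intro j y hy
    rw [← map_sub]
    refine (hV _).trans ?_
    have h1 : ‖f (x j) - f y‖ ≤ r := by
      refine (hfLip (x j) y).trans ?_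
      rw [dist_comm]
      exact hPball j hy
    nlinarith
  set δ : ℝ := Real.exp M * (C_Q * C_K * B_f * r) with hδ
  have hδpos : 0 < δ := by positivity
  have hgr : ∀ j, ∀ y ∈ P j, |g (x j) - g y| ≤ δ := by
    intro j y hy
    refine (exp_lip9 (le_of_abs_le (hM (x i) (x j))) (le_of_abs_le (hM (x i) y))).trans ?_
    rw [hδ]
    have h2 : |⟪Q (f (x i)), K (f (x j))⟫ - ⟪Q (f (x i)), K (f y)⟫|
        ≤ C_Q * C_K * B_f * r := by
      rw [← inner_sub_right, ← map_sub]
      refine (abs_real_inner_le_norm _ _).trans ?_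
      have h3 : ‖Q (f (x i))‖ ≤ C_Q * B_f := (hQ _).trans (by nlinarith [hfB (x i)])
      have h4 : ‖K (f (x j) - f y)‖ ≤ C_K * r := by
        refine (hK _).trans ?_
        have h5 : ‖f (x j) - f y‖ ≤ r := by
          refine (hfLip (x j) y).trans ?_
          rw [dist_comm]; exact hPball j hy
        nlinarith
      calc ‖Q (f (x i))‖ * ‖K (f (x j) - f y)‖ ≤ (C_Q * B_f) * (C_K * r) :=
            mul_le_mul h3 h4 (norm_nonneg _) (by positivity)
        _ = C_Q * C_K * B_f * r := by ring
    exact mul_le_mul_of_nonneg_left h2 (Real.exp_pos M).le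
  have hwr : ∀ j, ∀ y ∈ P j,
      ‖g (x j) • V (f (x j)) - w y‖ ≤ g (x j) * (C_V * r) + δ * (C_V * B_f) := by
    intro j y hy
    have hid : g (x j) • V (f (x j)) - w y
        = g (x j) • (V (f (x j)) - V (f y)) + (g (x j) - g y) • V (f y) := by
      rw [hw]; module
    rw [hid]
    refine (norm_add_le _ _).trans ?_
    rw [norm_smul, norm_smul, Real.norm_eq_abs, Real.norm_eq_abs,
      abs_of_pos (hgpos (x j))]
    have t1 : g (x j) * ‖V (f (x j)) - V (f y)‖ ≤ g (x j) * (C_V * r) :=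
      mul_le_mul_of_nonneg_left (hVr j y hy) (hgpos (x j)).le
    have t2 : |g (x j) - g y| * ‖V (f y)‖ ≤ δ * (C_V * B_f) :=
      mul_le_mul (hgr j y hy) (hVB y) (norm_nonneg _) hδpos.le
    linarith
  -- quantities
  set S : ℝ := ∑ j, g (x j) with hS
  set A : EuclideanSpace ℝ (Fin D) := ∑ j, g (x j) • V (f (x j)) with hA
  set T : ℝ := ∫ y, g y ∂μ with hT
  set B : EuclideanSpace ℝ (Fin D) := ∫ y, w y ∂μ with hB
  set s : ℝ := (N : ℝ)⁻¹ * S with hs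
  set a : EuclideanSpace ℝ (Fin D) := (N : ℝ)⁻¹ • A with ha
  have hSpos : 0 < S := Finset.sum_pos (fun j _ => hgpos _) ⟨i, Finset.mem_univ i⟩
  have hNR : (0:ℝ) < (N:ℝ) := by exact_mod_cast hN
  have hspos : 0 < s := mul_pos (inv_pos.2 hNR) hSpos
  have hsge : Real.exp (-M) ≤ s := by
    have h1 : (N:ℝ) * Real.exp (-M) ≤ S := by
      have h2 := Finset.card_nsmul_le_sum Finset.univ (fun j => g (x j)) (Real.exp (-M))
        (fun j _ => hggeM (x j))
      simpa [nsmul_eq_mul] using h2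
    rw [hs, inv_mul_eq_div, le_div_iff₀ hNR]
    linarith
  have hTge : Real.exp (-M) ≤ T := by
    have h1 : ∫ (_ : X), Real.exp (-M) ∂μ ≤ ∫ y, g y ∂μ :=
      integral_mono (integrable_const _) hgint hggeM
    simpa using h1
  have hTpos : 0 < T := lt_of_lt_of_le (Real.exp_pos _) hTge
  have hsinv : s⁻¹ ≤ Real.exp M := by
    have h1 : s⁻¹ ≤ (Real.exp (-M))⁻¹ := inv_anti₀ (Real.exp_pos _) hsge
    rwa [Real.exp_neg, inv_inv] at h1
  -- representations
  have hArep : a = ∑ j, ∫ y in P j, g (x j) • V (f (x j)) ∂μ := by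
    rw [ha, hA, Finset.smul_sum]
    refine Finset.sum_congr rfl fun j _ => ?_
    rw [setIntegral_const, measureReal_def, hμPr j]
  have hBrep : B = ∑ j, ∫ y in P j, w y ∂μ :=
    split_integral9 hPmeas hPdisj hPcover w hwint
  have hsrep : s = ∑ j, ∫ y in P j, g (x j) ∂μ := by
    rw [hs, hS, Finset.mul_sum]
    refine Finset.sum_congr rfl fun j _ => ?_
    rw [setIntegral_const, measureReal_def, hμPr j, smul_eq_mul]
  have hTrep : T = ∑ j, ∫ y in P j, g y ∂μ :=
    split_integral9 hPmeas hPdisj hPcover g hgint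
  -- main estimates
  have haB : ‖a - B‖ ≤ s * (C_V * r) + δ * (C_V * B_f) := by
    rw [hArep, hBrep, ← Finset.sum_sub_distrib]
    have hterm : ∀ j, (∫ y in P j, g (x j) • V (f (x j)) ∂μ) - ∫ y in P j, w y ∂μ
        = ∫ y in P j, (g (x j) • V (f (x j)) - w y) ∂μ := fun j =>
      (integral_sub (integrableOn_const (C := g (x j) • V (f (x j))) (s := P j) (μ := μ) (hμPfin j).ne) hwint.integrableOn).symm
    calc ‖∑ j, ((∫ y in P j, g (x j) • V (f (x j)) ∂μ) - ∫ y in P j, w y ∂μ)‖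
        ≤ ∑ j, (g (x j) * (C_V * r) + δ * (C_V * B_f)) * (N:ℝ)⁻¹ := by
          refine (norm_sum_le _ _).trans (Finset.sum_le_sum fun j _ => ?_)
          rw [hterm j, ← hμPr j]
          exact norm_setIntegral_le_of_norm_le_const (hμPfin j) (hwr j)
      _ = s * (C_V * r) + δ * (C_V * B_f) := by
          rw [← Finset.sum_mul, Finset.sum_add_distrib, ← Finset.sum_mul,
            Finset.sum_const, Finset.card_univ, Fintype.card_fin, nsmul_eq_mul,
            ← hS, hs]
          field_simp
  have hsT : |s - T| ≤ δ := by
    rw [hsrep, hTrep, ← Finset.sum_sub_distrib]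
    have hterm : ∀ j, (∫ y in P j, g (x j) ∂μ) - ∫ y in P j, g y ∂μ
        = ∫ y in P j, (g (x j) - g y) ∂μ := fun j =>
      (integral_sub (integrableOn_const (C := g (x j)) (s := P j) (μ := μ) (hμPfin j).ne) hgint.integrableOn).symm
    calc |∑ j, ((∫ y in P j, g (x j) ∂μ) - ∫ y in P j, g y ∂μ)|
        ≤ ∑ j, δ * (N:ℝ)⁻¹ := by
          rw [← Real.norm_eq_abs]
          refine (norm_sum_le _ _).trans (Finset.sum_le_sum fun j _ => ?_)
          rw [hterm j, ← hμPr j]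
          refine norm_setIntegral_le_of_norm_le_const (hμPfin j) ?_
          intro y hy
          rw [Real.norm_eq_abs]
          exact hgr j y hy
      _ = δ := by
          rw [Finset.sum_const, Finset.card_univ, Fintype.card_fin, nsmul_eq_mul]
          field_simp
  have hBnorm : ‖B‖ ≤ T * (C_V * B_f) := by
    rw [hB]
    refine (norm_integral_le_integral_norm _).trans ?_
    have h1 : ∫ y, ‖w y‖ ∂μ ≤ ∫ y, g y * (C_V * B_f) ∂μ := by
      refine integral_mono hwint.norm (hgint.mul_const _) fun y => ?_
      rw [hw, norm_smul, Real.norm_eq_abs, abs_of_pos (hgpos y)]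
      exact mul_le_mul_of_nonneg_left (hVB y) (hgpos y).le
    rwa [integral_mul_const, ← hT] at h1
  -- assemble
  have hSA : S⁻¹ • A = s⁻¹ • a := by
    rw [ha, smul_smul]
    congr 1
    rw [hs, mul_inv, inv_inv, mul_comm (N:ℝ) S⁻¹, mul_assoc, mul_inv_cancel₀ hNR.ne', mul_one]
  show ‖S⁻¹ • A - T⁻¹ • B‖ ≤ _
  rw [hSA]
  have t1 : s⁻¹ * ‖a - B‖ ≤ C_V * r + Real.exp M * (δ * (C_V * B_f)) := by
    calc s⁻¹ * ‖a - B‖ ≤ s⁻¹ * (s * (C_V * r) + δ * (C_V * B_f)) :=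
          mul_le_mul_of_nonneg_left haB (inv_pos.2 hspos).le
      _ = C_V * r + s⁻¹ * (δ * (C_V * B_f)) := by
          rw [mul_add, ← mul_assoc, inv_mul_cancel₀ hspos.ne', one_mul]
      _ ≤ C_V * r + Real.exp M * (δ * (C_V * B_f)) :=
          add_le_add_right (mul_le_mul_of_nonneg_right hsinv
            (mul_nonneg hδpos.le (mul_nonneg hCV.le hBf.le))) _
  have t2 : |s⁻¹ - T⁻¹| * ‖B‖ ≤ Real.exp M * (δ * (C_V * B_f)) := by
    have hid2 : s⁻¹ - T⁻¹ = (T - s) * (s⁻¹ * T⁻¹) := by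
      have h9 : (T - s) * (s⁻¹ * T⁻¹) = T * (T⁻¹ * s⁻¹) - s * (s⁻¹ * T⁻¹) := by ring
      rw [h9, ← mul_assoc, ← mul_assoc, mul_inv_cancel₀ hTpos.ne',
        mul_inv_cancel₀ hspos.ne', one_mul, one_mul]
    calc |s⁻¹ - T⁻¹| * ‖B‖ = |T - s| * (s⁻¹ * T⁻¹) * ‖B‖ := by
          rw [hid2, abs_mul, abs_of_pos (mul_pos (inv_pos.2 hspos) (inv_pos.2 hTpos))]
      _ ≤ δ * (s⁻¹ * T⁻¹) * (T * (C_V * B_f)) := by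
          refine mul_le_mul ?_ hBnorm (norm_nonneg _)
            (mul_nonneg hδpos.le (mul_pos (inv_pos.2 hspos) (inv_pos.2 hTpos)).le)
          refine mul_le_mul_of_nonneg_right ?_
            (mul_pos (inv_pos.2 hspos) (inv_pos.2 hTpos)).le
          rw [abs_sub_comm]
          exact hsT
      _ = (δ * (C_V * B_f)) * s⁻¹ * (T⁻¹ * T) := by ring
      _ = s⁻¹ * (δ * (C_V * B_f)) := by
          rw [inv_mul_cancel₀ hTpos.ne']
          ring
      _ ≤ Real.exp M * (δ * (C_V * B_f)) :=
          mul_le_mul_of_nonneg_right hsinv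
            (mul_nonneg hδpos.le (mul_nonneg hCV.le hBf.le))
  calc ‖s⁻¹ • a - T⁻¹ • B‖ = ‖s⁻¹ • (a - B) + (s⁻¹ - T⁻¹) • B‖ := by
        congr 1
        module
    _ ≤ ‖s⁻¹ • (a - B)‖ + ‖(s⁻¹ - T⁻¹) • B‖ := norm_add_le _ _
    _ = s⁻¹ * ‖a - B‖ + |s⁻¹ - T⁻¹| * ‖B‖ := by
        rw [norm_smul, norm_smul, Real.norm_eq_abs, Real.norm_eq_abs,
          abs_of_pos (inv_pos.2 hspos)]
    _ ≤ (C_V * r + Real.exp M * (δ * (C_V * B_f))) + Real.exp M * (δ * (C_V * B_f)) := by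
        linarith
    _ ≤ (Real.exp M * C_V + 2 * Real.exp (2 * M) * B_f ^ 2 * C_Q * C_K * C_V) * r := by
        have hexp2 : Real.exp (2 * M) = Real.exp M * Real.exp M := by
          rw [two_mul, Real.exp_add]
        rw [hδ, hexp2]
        nlinarith [Real.one_le_exp hM0, mul_pos hCV hr, Real.exp_pos M]
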